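/- Let q be an even prime power with q ≥ 64 and let β ∈ F_q^*. Then there exists z ∈ F_q with z(z+1)(z−β)(z^2 + zβ^2 + zβ + 1)(z^2 + zβ^3 + zβ^2 + zβ + β^3 + β^2 + 1)(zβ^3 + β + 1)(z^3 + z) ≠ 0 such that Tr_{q/2}((zβ^3 + zβ^2 + z + β)(z+β) / (z^2 β^4)) = 0. -/

import Mathlib

open Polynomial Finset

/-- For `q ≥ 64` even and `β ∈ F_q*`, there is `z ∈ F_q` avoiding the exceptional roots
such that `Tr_{q/2}((zβ³+zβ²+z+β)(z+β)/(z²β⁴)) = 0`. -/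
theorem stmt11 (q : ℕ) (hq : ∃ e : ℕ, 0 < e ∧ q = 2 ^ e) (hq64 : 64 ≤ q)
    (K : Type*) [Field K] [Fintype K] [Algebra (ZMod 2) K] (hK : Fintype.card K = q)
    (β : K) (hβ : β ≠ 0) :
    ∃ z : K,
      z * (z + 1) * (z - β) * (z ^ 2 + z * β ^ 2 + z * β + 1) *
        (z ^ 2 + z * β ^ 3 + z * β ^ 2 + z * β + β ^ 3 + β ^ 2 + 1) *
        (z * β ^ 3 + β + 1) * (z ^ 3 + z) ≠ 0 ∧
      Algebra.trace (ZMod 2) K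
        ((z * β ^ 3 + z * β ^ 2 + z + β) * (z + β) / (z ^ 2 * β ^ 4)) = 0 := by
  classical
  haveI : CharP K 2 := charP_of_injective_algebraMap (algebraMap (ZMod 2) K).injective 2
  haveI : FiniteDimensional (ZMod 2) K := Module.Finite.of_finite
  have h2 : (2 : K) = 0 := by exact_mod_cast CharP.cast_eq_zero K 2
  set tr : K →ₗ[ZMod 2] ZMod 2 := Algebra.trace (ZMod 2) K with htrdef
  -- trace is invariant under squaring
  have tr_sq : ∀ x : K, tr (x ^ 2) = tr x := by
    let e : K ≃ₐ[ZMod 2] K :=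
      AlgEquiv.ofRingEquiv (f := frobeniusEquiv K 2) (by
        intro x
        show (algebraMap (ZMod 2) K x) ^ 2 = algebraMap (ZMod 2) K x
        rw [← map_pow]
        congr 1
        revert x; decide)
    intro x
    have := Algebra.trace_eq_of_algEquiv e x
    exact this
  -- fibers of the trace have cardinality q / 2
  obtain ⟨u, hu⟩ := Algebra.trace_surjective (ZMod 2) K (1 : ZMod 2)
  have key : ∀ t : ZMod 2, (univ.filter fun w : K => tr w = t).card
      = (univ.filter fun w : K => tr w = t + 1).card := by
    intro t
    apply Finset.card_bij (fun w _ => w + u)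
    · intro a ha
      simp only [Finset.mem_filter, Finset.mem_univ, true_and] at *
      rw [map_add, ha]; exact congrArg _ hu
    · intro a _ b _ hab; exact add_right_cancel hab
    · intro b hb
      simp only [Finset.mem_filter, Finset.mem_univ, true_and] at hb
      refine ⟨b + u, ?_, ?_⟩
      · simp only [Finset.mem_filter, Finset.mem_univ, true_and]
        rw [map_add, hb, hu]
        have h11 : ∀ s : ZMod 2, s + 1 + 1 = s := by decide
        exact h11 t
      · rw [add_assoc, CharTwo.add_self_eq_zero, add_zero]
  have hcard : ∀ t : ZMod 2, 2 * (univ.filter fun w : K => tr w = t).card = q := by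
    intro t
    have hsplit := Finset.card_filter_add_card_filter_not
      (s := (univ : Finset K)) (p := fun w : K => tr w = t)
    have hne : (univ.filter fun w : K => ¬ tr w = t) = univ.filter fun w : K => tr w = t + 1 := by
      apply Finset.filter_congr
      intro w _
      have : ∀ a t : ZMod 2, ¬ a = t ↔ a = t + 1 := by decide
      exact this _ _
    rw [hne, ← key t, Finset.card_univ, hK] at hsplit
    omega
  -- the exceptional polynomial
  set P : Polynomial K := X * (X + 1) * (X - C β) *
    (X ^ 2 + C (β ^ 2 + β) * X + 1) *
    (X ^ 2 + C (β ^ 3 + β ^ 2 + β) * X + C (β ^ 3 + β ^ 2 + 1)) *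
    (C (β ^ 3) * X + C (β + 1)) *
    (X ^ 3 + X) with hPdef
  have hdeg11 : P.natDegree = 11 := by
    rw [hPdef]
    compute_degree
    all_goals simp [hβ]
  have hP0 : P ≠ 0 := by
    intro h
    rw [h] at hdeg11
    simp at hdeg11
  have hdeg : P.natDegree ≤ 11 := le_of_eq hdeg11
  have hroots : P.roots.toFinset.card ≤ 11 :=
    le_trans (Multiset.toFinset_card_le _) (le_trans (Polynomial.card_roots' P) hdeg)
  set B : Finset K := insert 0 (P.roots.toFinset.image (·⁻¹)) with hBdef
  have hB : B.card ≤ 12 := by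
    calc B.card ≤ (P.roots.toFinset.image (·⁻¹)).card + 1 := Finset.card_insert_le _ _
    _ ≤ 11 + 1 := by
        exact Nat.add_le_add_right (le_trans (Finset.card_image_le) hroots) 1
  -- pick w in the fiber of tr Cc, avoiding B
  set Cc : K := (β ^ 3 + β ^ 2 + 1) / β ^ 4 with hCc
  set T : Finset K := univ.filter fun w : K => tr w = tr Cc with hT
  have hTcard : 32 ≤ T.card := by
    have h32 := hcard (tr Cc)
    rw [← hT] at h32
    omega
  have hne : (T \ B).Nonempty := by
    rw [← Finset.card_pos]
    have := Finset.le_card_sdiff B T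
    omega
  obtain ⟨w, hw⟩ := hne
  rw [Finset.mem_sdiff] at hw
  obtain ⟨hwT, hwB⟩ := hw
  have hw0 : w ≠ 0 := fun h => hwB (by rw [h]; exact Finset.mem_insert_self _ _)
  have hwtr : tr w = tr Cc := (Finset.mem_filter.mp hwT).2
  refine ⟨w⁻¹, ?_, ?_⟩
  · -- nonvanishing
    have hz : w⁻¹ ≠ 0 := inv_ne_zero hw0
    have heval : P.eval w⁻¹ ≠ 0 := by
      intro h
      apply hwB
      apply Finset.mem_insert_of_mem
      rw [Finset.mem_image]
      exact ⟨w⁻¹, by rw [Multiset.mem_toFinset, Polynomial.mem_roots hP0]; exact h, inv_inv w⟩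
    intro h
    apply heval
    rw [hPdef]
    simp only [eval_mul, eval_add, eval_sub, eval_pow, eval_X, eval_C, eval_one]
    rw [← h]; ring
  · -- trace condition
    set z : K := w⁻¹ with hzdef
    have hz : z ≠ 0 := inv_ne_zero hw0
    have hzw : z⁻¹ = w := inv_inv w
    have hid : (z * β ^ 3 + z * β ^ 2 + z + β) * (z + β) / (z ^ 2 * β ^ 4)
        = Cc + (z⁻¹ + β⁻¹ * z⁻¹) + (z⁻¹ * β⁻¹) ^ 2 := by
      rw [hCc]
      field_simp
      ring_nf
      linear_combination (w⁻¹ * β) * h2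
    have htr0 : tr (Cc + (z⁻¹ + β⁻¹ * z⁻¹) + (z⁻¹ * β⁻¹) ^ 2) = 0 := by
      simp only [map_add]
      rw [tr_sq, mul_comm β⁻¹ z⁻¹, hzw, hwtr]
      have hx : ∀ a b : ZMod 2, a + (a + b) + b = 0 := by decide
      exact hx _ _
    show tr _ = 0
    rw [hid]
    exact htr0
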